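/- Suppose an integer-valued random variable S̃ with mean μ and variance σ² satisfies E[(S̃ − μ)f(S̃)] = σ² E[Δf(S̃)] for all bounded f: ℤ → ℝ. Then for every j ∈ ℤ, (σ² + j − μ)·P(S̃ = j) = σ²·P(S̃ = j−1). -/

import Mathlib

open MeasureTheory

/-- If `S̃` is a fixed point of the discrete zero bias transformation, then
`(σ² + j - μ)·P(S̃ = j) = σ²·P(S̃ = j-1)` for every `j ∈ ℤ`. -/
theorem zero_bias_fixed_point_recursion
    {Ω : Type*} [MeasurableSpace Ω] (P : Measure Ω) [IsProbabilityMeasure P]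
    (S : Ω → ℤ) (hS : Measurable S)
    (μ σ2 : ℝ)
    (hsq : Integrable (fun ω => ((S ω : ℝ)) ^ 2) P)
    (hmean : ∫ ω, (S ω : ℝ) ∂P = μ)
    (hvar : ∫ ω, ((S ω : ℝ) - μ) ^ 2 ∂P = σ2)
    (hfix : ∀ f : ℤ → ℝ, (∃ C, ∀ i, |f i| ≤ C) →
      ∫ ω, ((S ω : ℝ) - μ) * f (S ω) ∂P
        = σ2 * ∫ ω, (f (S ω + 1) - f (S ω)) ∂P) :
    ∀ j : ℤ, (σ2 + (j : ℝ) - μ) * (P {ω | S ω = j}).toReal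
      = σ2 * (P {ω | S ω = j - 1}).toReal := by
  intro j
  set f : ℤ → ℝ := fun i => if i = j then 1 else 0 with hf
  have hbd : ∃ C, ∀ i, |f i| ≤ C := by
    refine ⟨1, fun i => ?_⟩
    simp only [hf]
    split <;> norm_num
  have h := hfix f hbd
  have hAj : MeasurableSet {ω | S ω = j} := hS (measurableSet_singleton j)
  have hAj' : MeasurableSet {ω | S ω = j - 1} := hS (measurableSet_singleton (j - 1))
  have hL : (∫ ω, ((S ω : ℝ) - μ) * f (S ω) ∂P)
      = ((j : ℝ) - μ) * (P {ω | S ω = j}).toReal := by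
    have : (fun ω => ((S ω : ℝ) - μ) * f (S ω))
        = Set.indicator {ω | S ω = j} (fun _ => (j : ℝ) - μ) := by
      funext ω
      by_cases hω : S ω = j
      · simp [hf, hω, Set.indicator_of_mem, Set.mem_setOf_eq]
      · simp [hf, hω, Set.indicator_of_notMem, Set.mem_setOf_eq]
    rw [this, integral_indicator_const _ hAj, smul_eq_mul, measureReal_def]
    ring
  have hind1 : (fun ω => f (S ω + 1))
      = Set.indicator {ω | S ω = j - 1} (fun _ => (1 : ℝ)) := by
    funext ω
    by_cases hω : S ω = j - 1
    · have : S ω + 1 = j := by omega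
      simp [hf, this, hω, Set.mem_setOf_eq]
    · have : S ω + 1 ≠ j := by omega
      simp [hf, this, hω, Set.mem_setOf_eq]
  have hind2 : (fun ω => f (S ω))
      = Set.indicator {ω | S ω = j} (fun _ => (1 : ℝ)) := by
    funext ω
    by_cases hω : S ω = j
    · simp [hf, hω, Set.mem_setOf_eq]
    · simp [hf, hω, Set.mem_setOf_eq]
  have hint1 : Integrable (fun ω => f (S ω + 1)) P := by
    rw [hind1]
    exact (integrable_const (1 : ℝ)).indicator hAj'
  have hint2 : Integrable (fun ω => f (S ω)) P := by
    rw [hind2]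
    exact (integrable_const (1 : ℝ)).indicator hAj
  have hR : (∫ ω, (f (S ω + 1) - f (S ω)) ∂P)
      = (P {ω | S ω = j - 1}).toReal - (P {ω | S ω = j}).toReal := by
    rw [integral_sub hint1 hint2, hind1, hind2,
      integral_indicator_const _ hAj', integral_indicator_const _ hAj]
    simp [measureReal_def]
  rw [hL, hR] at h
  linear_combination h
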